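/- arXiv:1012.5346 — 2 statements merged into one kernel-verified Lean document; each statement's English description precedes it below -/
import Mathlib

section
/- Let R = k[[x]] over a field k, and let a ≥ b + 2 be positive integers. Then there is a short exact sequence of R-modules 0 → R/(x^{a−1}) → R/(x^a) ⊕ R/(x^b) → R/(x^{b+1}) → 0, where the first map sends 1 to (x, 1). Consequently, R/(x^a) ⊕ R/(x^b) degenerates by an extension to R/(x^{a−1}) ⊕ R/(x^{b+1}). -/
open PowerSeries

/-- `M` degenerates by an extension to `N`: there is a short exact sequence
`0 → U → M → V → 0` with `N ≅ U ⊕ V`. -/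
def DegeneratesByExt (R : Type) [CommRing R]
    (M N : Type) [AddCommGroup M] [Module R M] [AddCommGroup N] [Module R N] : Prop :=
  ∃ U : Submodule R M, Nonempty (N ≃ₗ[R] (U × (M ⧸ U)))

section Aux

variable (k : Type) [Field k]

local notation "R" => PowerSeries k

/-- The ideal `(X^n)`. -/
noncomputable def In (n : ℕ) : Ideal (PowerSeries k) := Ideal.span {(X : PowerSeries k) ^ n}

lemma mem_In_iff (n : ℕ) (r : R) : r ∈ In k n ↔ (X : R) ^ n ∣ r :=
  Ideal.mem_span_singleton

/-- The map `R → R/(X^a) × R/(X^b)`, `r ↦ (X r, r)`. -/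
noncomputable def phi (a b : ℕ) : R →ₗ[PowerSeries k] ((R ⧸ In k a) × (R ⧸ In k b)) :=
  ((In k a).mkQ.comp (LinearMap.mulLeft (PowerSeries k) (X : R))).prod (In k b).mkQ

lemma phi_apply (a b : ℕ) (r : R) :
    phi k a b r = ((In k a).mkQ ((X : R) * r), (In k b).mkQ r) := rfl

/-- The first map of the SES. -/
noncomputable def fmap (a b : ℕ) (h : b ≤ a - 1) (ha : 1 ≤ a) :
    (R ⧸ In k (a - 1)) →ₗ[PowerSeries k] ((R ⧸ In k a) × (R ⧸ In k b)) := by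
  refine Submodule.liftQ _ (phi k a b) ?_
  rw [In, Ideal.span_le, Set.singleton_subset_iff, SetLike.mem_coe, LinearMap.mem_ker,
    phi_apply, Prod.mk_eq_zero]
  constructor
  · rw [Submodule.mkQ_apply, Submodule.Quotient.mk_eq_zero, mem_In_iff, ← pow_succ']
    exact pow_dvd_pow _ (by omega)
  · rw [Submodule.mkQ_apply, Submodule.Quotient.mk_eq_zero, mem_In_iff]
    exact pow_dvd_pow _ h

lemma fmap_mk (a b : ℕ) (h : b ≤ a - 1) (ha : 1 ≤ a) (r : R) :
    fmap k a b h ha (Submodule.Quotient.mk r) = phi k a b r :=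
  Submodule.liftQ_apply _ _ _

/-- First component of `g`: natural projection `R/(X^a) → R/(X^{b+1})`. -/
noncomputable def g1 (a b : ℕ) (h : b + 1 ≤ a) :
    (R ⧸ In k a) →ₗ[PowerSeries k] (R ⧸ In k (b + 1)) := by
  refine Submodule.liftQ _ (In k (b+1)).mkQ ?_
  rw [In, Ideal.span_le, Set.singleton_subset_iff, SetLike.mem_coe, LinearMap.mem_ker,
    Submodule.mkQ_apply, Submodule.Quotient.mk_eq_zero, mem_In_iff]
  exact pow_dvd_pow _ h

/-- Second component of `g`: multiplication by `X`, `R/(X^b) → R/(X^{b+1})`. -/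
noncomputable def g2 (b : ℕ) : (R ⧸ In k b) →ₗ[PowerSeries k] (R ⧸ In k (b + 1)) := by
  refine Submodule.liftQ _ ((In k (b+1)).mkQ.comp (LinearMap.mulLeft (PowerSeries k) (X : R))) ?_
  rw [In, Ideal.span_le, Set.singleton_subset_iff, SetLike.mem_coe, LinearMap.mem_ker,
    LinearMap.comp_apply]
  show (In k (b+1)).mkQ ((X : R) * (X : R) ^ b) = 0
  rw [Submodule.mkQ_apply, Submodule.Quotient.mk_eq_zero, mem_In_iff, ← pow_succ']

/-- The second map of the SES. -/
noncomputable def gmap (a b : ℕ) (h : b + 1 ≤ a) :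
    ((R ⧸ In k a) × (R ⧸ In k b)) →ₗ[PowerSeries k] (R ⧸ In k (b + 1)) :=
  (g1 k a b h).comp (LinearMap.fst _ _ _) - (g2 k b).comp (LinearMap.snd _ _ _)

lemma gmap_mk (a b : ℕ) (h : b + 1 ≤ a) (u v : R) :
    gmap k a b h (Submodule.Quotient.mk u, Submodule.Quotient.mk v)
      = Submodule.Quotient.mk u - Submodule.Quotient.mk ((X : R) * v) := by
  have h1 : gmap k a b h (Submodule.Quotient.mk u, Submodule.Quotient.mk v)
      = g1 k a b h (Submodule.Quotient.mk u) - g2 k b (Submodule.Quotient.mk v) := rfl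
  rw [h1, g1, g2, Submodule.liftQ_apply, Submodule.liftQ_apply]
  rfl

end Aux

set_option maxHeartbeats 1000000 in
/-- Over `R = k[[x]]`, for `a ≥ b + 2` there is a short exact sequence
`0 → R/(x^{a-1}) → R/(x^a) ⊕ R/(x^b) → R/(x^{b+1}) → 0` whose first map sends `1` to
`(x, 1)`; consequently `R/(x^a) ⊕ R/(x^b)` degenerates by an extension to
`R/(x^{a-1}) ⊕ R/(x^{b+1})`. -/
theorem stmt5 (k : Type) [Field k] (a b : ℕ) (hb : 0 < b) (hab : b + 2 ≤ a) :
    (∃ (f : (PowerSeries k ⧸ Ideal.span {(X : PowerSeries k) ^ (a - 1)}) →ₗ[PowerSeries k]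
          ((PowerSeries k ⧸ Ideal.span {(X : PowerSeries k) ^ a}) ×
            (PowerSeries k ⧸ Ideal.span {(X : PowerSeries k) ^ b})))
        (g : ((PowerSeries k ⧸ Ideal.span {(X : PowerSeries k) ^ a}) ×
            (PowerSeries k ⧸ Ideal.span {(X : PowerSeries k) ^ b})) →ₗ[PowerSeries k]
          (PowerSeries k ⧸ Ideal.span {(X : PowerSeries k) ^ (b + 1)})),
        Function.Injective f ∧ Function.Surjective g ∧ Function.Exact f g ∧
        f 1 = (Ideal.Quotient.mk _ (X : PowerSeries k), 1)) ∧
    DegeneratesByExt (PowerSeries k)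
      ((PowerSeries k ⧸ Ideal.span {(X : PowerSeries k) ^ a}) ×
        (PowerSeries k ⧸ Ideal.span {(X : PowerSeries k) ^ b}))
      ((PowerSeries k ⧸ Ideal.span {(X : PowerSeries k) ^ (a - 1)}) ×
        (PowerSeries k ⧸ Ideal.span {(X : PowerSeries k) ^ (b + 1)})) := by
  have h1 : b ≤ a - 1 := by omega
  have ha : 1 ≤ a := by omega
  have h2 : b + 1 ≤ a := by omega
  set f := fmap k a b h1 ha with hf_def
  set g := gmap k a b h2 with hg_def
  -- injectivity
  have hinj : Function.Injective f := by
    rw [← LinearMap.ker_eq_bot, eq_bot_iff]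
    intro y hy
    obtain ⟨r, rfl⟩ := Submodule.Quotient.mk_surjective _ y
    rw [LinearMap.mem_ker, hf_def, fmap_mk, phi_apply, Prod.mk_eq_zero] at hy
    obtain ⟨hy1, _⟩ := hy
    rw [Submodule.mkQ_apply, Submodule.Quotient.mk_eq_zero, mem_In_iff] at hy1
    rw [Submodule.mem_bot, Submodule.Quotient.mk_eq_zero, mem_In_iff]
    have haa : a = (a - 1) + 1 := by omega
    rw [haa, pow_succ'] at hy1
    exact (mul_dvd_mul_iff_left (X_ne_zero : (X : PowerSeries k) ≠ 0)).mp hy1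
  -- surjectivity
  have hsurj : Function.Surjective g := by
    intro y
    obtain ⟨r, rfl⟩ := Submodule.Quotient.mk_surjective _ y
    refine ⟨(Submodule.Quotient.mk r, 0), ?_⟩
    have h0 : (0 : PowerSeries k ⧸ In k b) = Submodule.Quotient.mk 0 := rfl
    rw [hg_def, h0, gmap_mk, mul_zero]
    simp
  -- exactness
  have hexact : Function.Exact f g := by
    rintro ⟨y1, y2⟩
    obtain ⟨u, rfl⟩ := Submodule.Quotient.mk_surjective _ y1
    obtain ⟨v, rfl⟩ := Submodule.Quotient.mk_surjective _ y2
    constructor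
    · intro hy
      rw [hg_def, gmap_mk, sub_eq_zero] at hy
      rw [Submodule.Quotient.eq, mem_In_iff] at hy
      obtain ⟨w, hw⟩ := hy
      refine ⟨Submodule.Quotient.mk (v + (X : PowerSeries k) ^ b * w), ?_⟩
      rw [hf_def, fmap_mk, phi_apply]
      have e1 : (X : PowerSeries k) * (v + (X : PowerSeries k) ^ b * w) = u := by
        linear_combination -hw
      rw [e1]
      refine Prod.ext ?_ ?_
      · rfl
      · show (In k b).mkQ (v + (X : PowerSeries k) ^ b * w) = Submodule.Quotient.mk v
        rw [Submodule.mkQ_apply, Submodule.Quotient.eq, mem_In_iff]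
        exact ⟨w, by ring⟩
    · rintro ⟨x, hx⟩
      obtain ⟨r, rfl⟩ := Submodule.Quotient.mk_surjective _ x
      rw [hf_def, fmap_mk, phi_apply] at hx
      rw [← hx]
      have h3 : ((In k a).mkQ ((X : PowerSeries k) * r), (In k b).mkQ r)
          = ((Submodule.Quotient.mk ((X : PowerSeries k) * r) :
              PowerSeries k ⧸ In k a), (Submodule.Quotient.mk r : PowerSeries k ⧸ In k b)) := rfl
      rw [h3, hg_def, gmap_mk, sub_self]
  refine ⟨⟨f, g, hinj, hsurj, hexact, ?_⟩, ?_⟩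
  · -- f 1 = (mk X, 1)
    show phi k a b 1 = _
    rw [phi_apply, mul_one]
    refine Prod.ext ?_ ?_
    · rw [Submodule.mkQ_apply, ← Ideal.Quotient.mk_eq_mk]
      rfl
    · rw [Submodule.mkQ_apply, ← Ideal.Quotient.mk_eq_mk]
      exact map_one (Ideal.Quotient.mk _)
  · -- degeneration
    refine ⟨LinearMap.range f, ⟨?_⟩⟩
    have e1 : (PowerSeries k ⧸ In k (a-1)) ≃ₗ[PowerSeries k] LinearMap.range f :=
      LinearEquiv.ofInjective f hinj
    have hker : LinearMap.ker g = LinearMap.range f := (LinearMap.exact_iff.mp hexact)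
    have e2 : (((PowerSeries k ⧸ In k a) × (PowerSeries k ⧸ In k b)) ⧸ LinearMap.range f)
        ≃ₗ[PowerSeries k] (PowerSeries k ⧸ In k (b+1)) :=
      (Submodule.quotEquivOfEq _ _ hker.symm).trans (g.quotKerEquivOfSurjective hsurj)
    exact e1.prodCongr e2.symm
end

section
/- Let R = k[[x]] over a field k, and let M, N be R-modules of length n with partitions p_M and p_N. If p_M ⊵ p_N in the dominance order, then N is obtained from M by an iteration of degenerations by extensions (M ≤_ext N). -/
/-- `p : ℕ → ℕ` (indices `0, …, n-1` corresponding to `p_1, …, p_n`) is a partition of `n`. -/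
def IsPartitionOf (n : ℕ) (p : ℕ → ℕ) : Prop :=
  (∀ i, p (i + 1) ≤ p i) ∧ (∀ i, n ≤ i → p i = 0) ∧ (∑ i ∈ Finset.range n, p i) = n

/-- The dominance order on partitions. -/
def Dominates (p q : ℕ → ℕ) : Prop :=
  ∀ j, (∑ i ∈ Finset.range j, q i) ≤ ∑ i ∈ Finset.range j, p i

/-- `M ≤_ext N`: `N` is obtained from `M` by a finite chain of degenerations by
extensions. -/
def ExtLE (R : Type) [CommRing R] : ModuleCat.{0} R → ModuleCat.{0} R → Prop :=
  Relation.ReflTransGen (fun A B => DegeneratesByExt R A B)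

section Aux
variable {R : Type} [CommRing R]
variable {A B W : Type} [AddCommGroup A] [Module R A] [AddCommGroup B] [Module R B]
  [AddCommGroup W] [Module R W]

def zeroProd (Z : Type) [AddCommGroup Z] [Module R Z] [Subsingleton Z] :
    A ≃ₗ[R] Z × A where
  toFun a := (0, a)
  invFun x := x.2
  map_add' _ _ := by ext <;> simp
  map_smul' _ _ := by ext <;> simp
  left_inv _ := rfl
  right_inv x := by ext <;> simp [Subsingleton.elim (0 : Z) x.1]

lemma degen_of_equiv (e : A ≃ₗ[R] B) : DegeneratesByExt R A B :=
  ⟨⊥, ⟨e.symm.trans <| ((Submodule.quotEquivOfEqBot (⊥ : Submodule R A) rfl).symm).trans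
    (zeroProd _)⟩⟩

def prodSubEquiv (p : Submodule R A) (q : Submodule R W) :
    (p.prod q : Submodule R (A × W)) ≃ₗ[R] p × q where
  toFun x := (⟨x.1.1, x.2.1⟩, ⟨x.1.2, x.2.2⟩)
  invFun y := ⟨(y.1.1, y.2.1), ⟨y.1.2, y.2.2⟩⟩
  map_add' _ _ := rfl
  map_smul' _ _ := rfl
  left_inv _ := rfl
  right_inv _ := rfl

lemma degen_prod (h : DegeneratesByExt R A B) : DegeneratesByExt R (A × W) (B × W) := by
  obtain ⟨U, ⟨e⟩⟩ := h
  refine ⟨U.prod ⊤, ⟨?_⟩⟩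
  let g : (A × W) →ₗ[R] A ⧸ U := U.mkQ.comp (LinearMap.fst R A W)
  have hker : LinearMap.ker g = U.prod ⊤ := by
    ext ⟨a, w⟩
    simp [g, LinearMap.mem_ker, Submodule.mem_prod, Submodule.Quotient.mk_eq_zero]
  have hsurj : Function.Surjective g := by
    intro c
    obtain ⟨a, rfl⟩ := Submodule.mkQ_surjective U c
    exact ⟨(a, 0), rfl⟩
  let q : ((A × W) ⧸ (U.prod (⊤ : Submodule R W))) ≃ₗ[R] A ⧸ U :=
    (Submodule.quotEquivOfEq _ _ hker.symm).trans (g.quotKerEquivOfSurjective hsurj)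
  have e1 : (B × W) ≃ₗ[R] ((U × (A ⧸ U)) × W) := LinearEquiv.prodCongr e (LinearEquiv.refl R W)
  have e2 : ((U × (A ⧸ U)) × W) ≃ₗ[R] (U × ((A ⧸ U) × W)) := LinearEquiv.prodAssoc R _ _ _
  have e3 : (U × ((A ⧸ U) × W)) ≃ₗ[R] (U × (W × (A ⧸ U))) :=
    LinearEquiv.prodCongr (LinearEquiv.refl R _) (LinearEquiv.prodComm R _ _)
  have e4 : (U × (W × (A ⧸ U))) ≃ₗ[R] ((U × W) × (A ⧸ U)) := (LinearEquiv.prodAssoc R _ _ _).symm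
  have e5 : ((U × W) × (A ⧸ U)) ≃ₗ[R] ((U × (⊤ : Submodule R W)) × (A ⧸ U)) :=
    LinearEquiv.prodCongr (LinearEquiv.prodCongr (LinearEquiv.refl R _) Submodule.topEquiv.symm)
      (LinearEquiv.refl R _)
  have e6 : ((U × (⊤ : Submodule R W)) × (A ⧸ U)) ≃ₗ[R]
      ((U.prod (⊤ : Submodule R W) : Submodule R (A × W)) × ((A × W) ⧸ U.prod (⊤ : Submodule R W))) :=
    LinearEquiv.prodCongr (prodSubEquiv U ⊤).symm q.symm
  exact e1.trans <| e2.trans <| e3.trans <| e4.trans <| e5.trans e6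

end Aux

section Pair
open PowerSeries
variable (k : Type) [Field k]

abbrev Cyc (a : ℕ) : Type := PowerSeries k ⧸ Ideal.span {(X : PowerSeries k) ^ a}

set_option maxHeartbeats 1000000 in
lemma pair_degen (a b : ℕ) (hba : b ≤ a) :
    DegeneratesByExt (PowerSeries k) (Cyc k (a + 1) × Cyc k b) (Cyc k a × Cyc k (b + 1)) := by
  set R := PowerSeries k with hR
  have h1 : Ideal.span {(X : R) ^ (a + 1)} ≤
      LinearMap.ker (Ideal.span {(X : R) ^ (b + 1)}).mkQ := by
    rw [Ideal.span_le]
    intro z hz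
    rcases hz with rfl
    simp only [SetLike.mem_coe, LinearMap.mem_ker, Submodule.mkQ_apply,
      Submodule.Quotient.mk_eq_zero, Ideal.mem_span_singleton]
    exact pow_dvd_pow X (by omega)
  have h2 : Ideal.span {(X : R) ^ b} ≤
      LinearMap.ker ((Ideal.span {(X : R) ^ (b + 1)}).mkQ.comp
        (LinearMap.toSpanSingleton R R X)) := by
    rw [Ideal.span_le]
    intro z hz
    rcases hz with rfl
    simp only [SetLike.mem_coe, LinearMap.mem_ker, LinearMap.comp_apply,
      LinearMap.toSpanSingleton_apply, Submodule.mkQ_apply,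
      Submodule.Quotient.mk_eq_zero, Ideal.mem_span_singleton, smul_eq_mul]
    exact ⟨1, by change (X : R) ^ b * X = X ^ (b + 1) * 1; ring⟩
  set f₁ : Cyc k (a + 1) →ₗ[R] Cyc k (b + 1) :=
    Submodule.liftQ _ (Ideal.span {(X : R) ^ (b + 1)}).mkQ h1 with hf₁
  set f₂ : Cyc k b →ₗ[R] Cyc k (b + 1) :=
    Submodule.liftQ _ ((Ideal.span {(X : R) ^ (b + 1)}).mkQ.comp
      (LinearMap.toSpanSingleton R R X)) h2 with hf₂
  set ψ : (Cyc k (a + 1) × Cyc k b) →ₗ[R] Cyc k (b + 1) :=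
    f₁.comp (LinearMap.fst R _ _) - f₂.comp (LinearMap.snd R _ _) with hψ
  set φ : R →ₗ[R] (Cyc k (a + 1) × Cyc k b) :=
    LinearMap.prod ((Ideal.span {(X : R) ^ (a + 1)}).mkQ.comp
      (LinearMap.toSpanSingleton R R X)) (Ideal.span {(X : R) ^ b}).mkQ with hφ
  have hXne : (X : R) ≠ 0 := X_ne_zero
  have hψ_mk : ∀ u v : R, ψ (Submodule.Quotient.mk u, Submodule.Quotient.mk v)
      = Submodule.Quotient.mk (u - v * X) := by
    intro u v
    have : ψ (Submodule.Quotient.mk u, Submodule.Quotient.mk v)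
        = f₁ (Submodule.Quotient.mk u) - f₂ (Submodule.Quotient.mk v) := rfl
    rw [this, hf₁, hf₂, Submodule.liftQ_apply, Submodule.liftQ_apply, LinearMap.comp_apply,
      LinearMap.toSpanSingleton_apply, Submodule.mkQ_apply, Submodule.mkQ_apply,
      ← Submodule.Quotient.mk_sub, smul_eq_mul]
  have hφ_mk : ∀ r : R, φ r
      = (Submodule.Quotient.mk (r * X), Submodule.Quotient.mk r) := by
    intro r
    have : φ r = (Submodule.Quotient.mk (r • X), Submodule.Quotient.mk r) := rfl
    rw [this, smul_eq_mul]
  have hkerφ : LinearMap.ker φ = Ideal.span {(X : R) ^ a} := by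
    ext r
    rw [LinearMap.mem_ker, hφ_mk, Prod.mk_eq_zero, Submodule.Quotient.mk_eq_zero,
      Submodule.Quotient.mk_eq_zero]
    show (r * X) ∈ Ideal.span {(X : R) ^ (a+1)} ∧ r ∈ Ideal.span {(X : R) ^ b}
      ↔ r ∈ Ideal.span {(X : R) ^ a}
    rw [Ideal.mem_span_singleton, Ideal.mem_span_singleton, Ideal.mem_span_singleton]
    constructor
    · rintro ⟨hd1, _⟩
      rw [pow_succ] at hd1
      exact (mul_dvd_mul_iff_right hXne).mp hd1
    · intro h
      exact ⟨by rw [pow_succ]; exact mul_dvd_mul_right h X, dvd_trans (pow_dvd_pow X hba) h⟩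
  have hrange : LinearMap.range φ = LinearMap.ker ψ := by
    apply le_antisymm
    · rintro _ ⟨r, rfl⟩
      rw [LinearMap.mem_ker, hφ_mk, hψ_mk]
      simp
    · rintro ⟨zu, zv⟩ hz
      obtain ⟨u, hu⟩ := Submodule.Quotient.mk_surjective _ zu
      obtain ⟨v, hv⟩ := Submodule.Quotient.mk_surjective _ zv
      rw [LinearMap.mem_ker] at hz
      rw [← hu, ← hv] at hz ⊢
      rw [hψ_mk, Submodule.Quotient.mk_eq_zero, Ideal.mem_span_singleton] at hz
      obtain ⟨w, hw⟩ := hz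
      refine ⟨v + X ^ b * w, ?_⟩
      rw [hφ_mk]
      refine Prod.ext ?_ ?_
      · show Submodule.Quotient.mk _ = Submodule.Quotient.mk _
        have : (v + X ^ b * w) * X = u := by linear_combination -hw
        rw [this]
      · show Submodule.Quotient.mk _ = Submodule.Quotient.mk _
        rw [Submodule.Quotient.eq]
        have : v + X ^ b * w - v = X ^ b * w := by ring
        rw [this]
        exact Ideal.mem_span_singleton.mpr (dvd_mul_right _ _)
  have hsurjψ : Function.Surjective ψ := by
    intro c
    obtain ⟨u, rfl⟩ := Submodule.Quotient.mk_surjective _ c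
    refine ⟨(Submodule.Quotient.mk u, Submodule.Quotient.mk 0), ?_⟩
    rw [hψ_mk]
    norm_num
  refine ⟨LinearMap.ker ψ, ⟨?_⟩⟩
  have e₁ : Cyc k a ≃ₗ[R] (LinearMap.ker ψ : Submodule R (Cyc k (a+1) × Cyc k b)) :=
    (Submodule.quotEquivOfEq _ _ hkerφ.symm).trans
      (φ.quotKerEquivRange.trans (LinearEquiv.ofEq _ _ hrange))
  have e₂ : ((Cyc k (a+1) × Cyc k b) ⧸ (LinearMap.ker ψ)) ≃ₗ[R] Cyc k (b + 1) :=
    ψ.quotKerEquivOfSurjective hsurjψ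
  exact LinearEquiv.prodCongr e₁ e₂.symm
end Pair

section Split
variable {R : Type} [CommRing R] {ι : Type} [DecidableEq ι]

def boolPi (ψ : Bool → Type) [∀ b, AddCommGroup (ψ b)] [∀ b, Module R (ψ b)] :
    (∀ b, ψ b) ≃ₗ[R] ψ true × ψ false where
  toFun f := (f true, f false)
  invFun x b := b.rec x.2 x.1
  map_add' _ _ := rfl
  map_smul' _ _ := rfl
  left_inv f := funext fun b => by cases b <;> rfl
  right_inv x := rfl

def piSubtypeProdLinear (pr : ι → Prop) [DecidablePred pr] (φ : ι → Type)
    [∀ i, AddCommGroup (φ i)] [∀ i, Module R (φ i)] :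
    (∀ i, φ i) ≃ₗ[R] (∀ i : {x // pr x}, φ i) × (∀ i : {x // ¬ pr x}, φ i) :=
  { Equiv.piEquivPiSubtypeProd pr φ with
    map_add' := fun _ _ => rfl
    map_smul' := fun _ _ => rfl }

def twoEquiv (i j : ι) (hij : i ≠ j) : Bool ≃ {l : ι // l = i ∨ l = j} where
  toFun b := if b then ⟨i, Or.inl rfl⟩ else ⟨j, Or.inr rfl⟩
  invFun s := decide (s.1 = i)
  left_inv b := by cases b <;> simp [hij, Ne.symm hij]
  right_inv s := by
    rcases s with ⟨l, hl | hl⟩ <;> subst hl <;> simp [hij, Ne.symm hij]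

def splitPair (i j : ι) (hij : i ≠ j) (φ : ι → Type)
    [∀ i, AddCommGroup (φ i)] [∀ i, Module R (φ i)] :
    (∀ l, φ l) ≃ₗ[R] (φ i × φ j) × (∀ l : {l : ι // ¬ (l = i ∨ l = j)}, φ l) :=
  (piSubtypeProdLinear (fun l => l = i ∨ l = j) φ).trans
    (LinearEquiv.prodCongr
      (((LinearEquiv.piCongrLeft R (fun s : {l // l = i ∨ l = j} => φ s.1)
        (twoEquiv i j hij)).symm).trans (boolPi _))
      (LinearEquiv.refl R _))

end Split

section Step
open PowerSeries
variable (k : Type) [Field k]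

noncomputable def cycCongr {a b : ℕ} (h : a = b) : Cyc k a ≃ₗ[PowerSeries k] Cyc k b :=
  h ▸ LinearEquiv.refl (PowerSeries k) (Cyc k a)

lemma extLE_step {A B : Type} [AddCommGroup A] [Module (PowerSeries k) A]
    [AddCommGroup B] [Module (PowerSeries k) B] (h : DegeneratesByExt (PowerSeries k) A B) :
    ExtLE (PowerSeries k) (ModuleCat.of (PowerSeries k) A) (ModuleCat.of (PowerSeries k) B) :=
  Relation.ReflTransGen.single h

set_option maxHeartbeats 1000000 in
lemma pi_step (n : ℕ) (p : ℕ → ℕ) (i j : ℕ) (hi : i < n) (hj : j < n) (hij : i ≠ j)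
    (hlt : p j + 1 ≤ p i) :
    ExtLE (PowerSeries k) (ModuleCat.of (PowerSeries k) (∀ l : Fin n, Cyc k (p l)))
      (ModuleCat.of (PowerSeries k)
        (∀ l : Fin n, Cyc k (Function.update (Function.update p i (p i - 1)) j (p j + 1) l))) := by
  set R := PowerSeries k with hR
  set p' := Function.update (Function.update p i (p i - 1)) j (p j + 1) with hp'
  have hp'i : p' i = p i - 1 := by rw [hp', Function.update_of_ne hij, Function.update_self]
  have hp'j : p' j = p j + 1 := by rw [hp', Function.update_self]
  have hp'other : ∀ l, l ≠ i → l ≠ j → p' l = p l := by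
    intro l h1 h2; rw [hp', Function.update_of_ne h2, Function.update_of_ne h1]
  set I : Fin n := ⟨i, hi⟩ with hI
  set J : Fin n := ⟨j, hj⟩ with hJ
  have hIJ : I ≠ J := fun h => hij (congrArg Fin.val h)
  have e₁ := splitPair (R := R) I J hIJ (fun l : Fin n => Cyc k (p l))
  have e₂ := splitPair (R := R) I J hIJ (fun l : Fin n => Cyc k (p' l))
  have eW : (∀ l : {l : Fin n // ¬ (l = I ∨ l = J)}, Cyc k (p l.1)) ≃ₗ[R]
      (∀ l : {l : Fin n // ¬ (l = I ∨ l = J)}, Cyc k (p' l.1)) := by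
    refine LinearEquiv.piCongrRight fun s => cycCongr k ?_
    refine (hp'other s.1 ?_ ?_).symm
    · intro h; exact s.2 (Or.inl (Fin.ext h))
    · intro h; exact s.2 (Or.inr (Fin.ext h))
  have ha : p i = (p i - 1) + 1 := by omega
  have step1 : ExtLE R (ModuleCat.of R (∀ l : Fin n, Cyc k (p l)))
      (ModuleCat.of R ((Cyc k ((p i - 1) + 1) × Cyc k (p j)) ×
        (∀ l : {l : Fin n // ¬ (l = I ∨ l = J)}, Cyc k (p l.1)))) :=
    extLE_step k (degen_of_equiv (e₁.trans (LinearEquiv.prodCongr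
      (LinearEquiv.prodCongr (cycCongr k ha) (LinearEquiv.refl R _)) (LinearEquiv.refl R _))))
  have step2 : ExtLE R
      (ModuleCat.of R ((Cyc k ((p i - 1) + 1) × Cyc k (p j)) ×
        (∀ l : {l : Fin n // ¬ (l = I ∨ l = J)}, Cyc k (p l.1))))
      (ModuleCat.of R ((Cyc k (p i - 1) × Cyc k (p j + 1)) ×
        (∀ l : {l : Fin n // ¬ (l = I ∨ l = J)}, Cyc k (p l.1)))) :=
    extLE_step k (degen_prod (pair_degen k (p i - 1) (p j) (by omega)))
  have step3 : ExtLE R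
      (ModuleCat.of R ((Cyc k (p i - 1) × Cyc k (p j + 1)) ×
        (∀ l : {l : Fin n // ¬ (l = I ∨ l = J)}, Cyc k (p l.1))))
      (ModuleCat.of R (∀ l : Fin n, Cyc k (p' l))) :=
    extLE_step k (degen_of_equiv ((LinearEquiv.prodCongr
      (LinearEquiv.prodCongr (cycCongr k hp'i.symm) (cycCongr k hp'j.symm)) eW).trans e₂.symm))
  exact step1.trans (step2.trans step3)

end Step

section Chain
open PowerSeries Finset
variable (k : Type) [Field k]

set_option maxHeartbeats 1000000 in
lemma dominance_chain (n : ℕ) (q : ℕ → ℕ) (hqs : ∀ i, q (i + 1) ≤ q i)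
    (hq0 : ∀ i, n ≤ i → q i = 0) (d : ℕ) :
    ∀ p : ℕ → ℕ, (∀ i, n ≤ i → p i = 0) → (∑ m ∈ range n, p m) = (∑ m ∈ range n, q m) →
    Dominates p q →
    (∑ l ∈ range (n + 1), ((∑ m ∈ range l, p m) - (∑ m ∈ range l, q m))) = d →
    ExtLE (PowerSeries k) (ModuleCat.of (PowerSeries k) (∀ l : Fin n, Cyc k (p l)))
      (ModuleCat.of (PowerSeries k) (∀ l : Fin n, Cyc k (q l))) := by
  induction d using Nat.strong_induction_on with
  | _ d IH =>
    intro p h0 hsum hdom hD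
    by_cases hpq : ∀ m, p m = q m
    · have : p = q := funext hpq
      subst this
      exact Relation.ReflTransGen.refl
    · push_neg at hpq
      have hex : ∃ m, p m ≠ q m := hpq
      classical
      set i := Nat.find hex with hi
      have hpi_ne : p i ≠ q i := Nat.find_spec hex
      have hmin : ∀ m, m < i → p m = q m := fun m hm => not_not.mp (Nat.find_min hex hm)
      have hi_lt_n : i < n := by
        by_contra hc
        push_neg at hc
        exact hpi_ne ((h0 i hc).trans (hq0 i hc).symm)
      have hSi : ∀ l, l ≤ i → (∑ m ∈ range l, p m) = ∑ m ∈ range l, q m := by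
        intro l hl
        exact Finset.sum_congr rfl fun m hm => hmin m (lt_of_lt_of_le (mem_range.mp hm) hl)
      have hqi_lt : q i < p i := by
        have h1 := hdom (i + 1)
        rw [sum_range_succ, sum_range_succ, hSi i le_rfl] at h1
        omega
      have hexj : ∃ m, i < m ∧ p m < q m := by
        by_contra hno
        push_neg at hno
        have h1 : ∀ m ∈ range n, q m ≤ p m := by
          intro m _
          rcases lt_trichotomy m i with h | h | h
          · exact (hmin m h).ge
          · subst h; exact hqi_lt.le
          · exact hno m h
        have := Finset.sum_lt_sum h1 ⟨i, mem_range.mpr hi_lt_n, hqi_lt⟩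
        omega
      set j := Nat.find hexj with hj
      obtain ⟨hij_lt, hpj_lt⟩ : i < j ∧ p j < q j := Nat.find_spec hexj
      have hjmin : ∀ m, i < m → m < j → q m ≤ p m := by
        intro m h1 h2
        have := Nat.find_min hexj h2
        push_neg at this
        exact this h1
      have hj_lt_n : j < n := by
        by_contra hc
        push_neg at hc
        rw [h0 j hc, hq0 j hc] at hpj_lt
        omega
      have hij_ne : i ≠ j := Nat.ne_of_lt hij_lt
      have hq_mono : q j ≤ q i := (antitone_nat_of_succ_le hqs) hij_lt.le
      have hlt : p j + 1 ≤ p i := by omega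
      set p' := Function.update (Function.update p i (p i - 1)) j (p j + 1) with hp'
      have hp'i : p' i = p i - 1 := by
        rw [hp', Function.update_of_ne hij_ne, Function.update_self]
      have hp'j : p' j = p j + 1 := by rw [hp', Function.update_self]
      have hp'other : ∀ l, l ≠ i → l ≠ j → p' l = p l := by
        intro l h1 h2; rw [hp', Function.update_of_ne h2, Function.update_of_ne h1]
      have hS'_low : ∀ l, l ≤ i → (∑ m ∈ range l, p' m) = ∑ m ∈ range l, p m := by
        intro l hl
        refine Finset.sum_congr rfl fun m hm => ?_
        have hm' := mem_range.mp hm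
        exact hp'other m (by omega) (by omega)
      have hS'_mid : ∀ l, i < l → l ≤ j →
          (∑ m ∈ range l, p' m) + 1 = ∑ m ∈ range l, p m := by
        intro l h1 h2
        have hiin : i ∈ range l := mem_range.mpr h1
        rw [← Finset.add_sum_erase _ p' hiin, ← Finset.add_sum_erase _ p hiin]
        have he : ∑ m ∈ (range l).erase i, p' m = ∑ m ∈ (range l).erase i, p m := by
          refine Finset.sum_congr rfl fun m hm => ?_
          have h3 := Finset.ne_of_mem_erase hm
          have h4 := mem_range.mp (Finset.mem_of_mem_erase hm)
          exact hp'other m h3 (by omega)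
        rw [he, hp'i]
        omega
      have hS'_hi : ∀ l, j < l → (∑ m ∈ range l, p' m) = ∑ m ∈ range l, p m := by
        intro l h1
        have hjin : j ∈ range l := mem_range.mpr h1
        have hiin : i ∈ (range l).erase j := by
          refine Finset.mem_erase.mpr ⟨hij_ne, mem_range.mpr (by omega)⟩
        rw [← Finset.add_sum_erase _ p' hjin, ← Finset.add_sum_erase _ p hjin,
          ← Finset.add_sum_erase _ p' hiin, ← Finset.add_sum_erase _ p hiin]
        have he : ∑ m ∈ ((range l).erase j).erase i, p' m
            = ∑ m ∈ ((range l).erase j).erase i, p m := by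
          refine Finset.sum_congr rfl fun m hm => ?_
          have h3 := Finset.ne_of_mem_erase hm
          have h4 := Finset.ne_of_mem_erase (Finset.mem_of_mem_erase hm)
          exact hp'other m h3 h4
        rw [he, hp'i, hp'j]
        omega
      have hstrict : ∀ l, i < l → l ≤ j →
          (∑ m ∈ range l, q m) < ∑ m ∈ range l, p m := by
        intro l h1 h2
        refine Finset.sum_lt_sum ?_ ⟨i, mem_range.mpr h1, hqi_lt⟩
        intro m hm
        have hm' := mem_range.mp hm
        rcases lt_trichotomy m i with h | h | h
        · exact (hmin m h).ge
        · subst h; exact hqi_lt.le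
        · exact hjmin m h (by omega)
      have h0' : ∀ m, n ≤ m → p' m = 0 := by
        intro m hm
        rw [hp'other m (by omega) (by omega)]
        exact h0 m hm
      have hsum' : (∑ m ∈ range n, p' m) = ∑ m ∈ range n, q m := by
        rw [hS'_hi n hj_lt_n]
        exact hsum
      have hdom' : Dominates p' q := by
        intro l
        rcases le_or_gt l i with h | h
        · rw [hS'_low l h]; exact hdom l
        · rcases le_or_gt l j with h2 | h2
          · have := hstrict l h h2
            have := hS'_mid l h h2
            omega
          · rw [hS'_hi l h2]; exact hdom l
      have hDlt : (∑ l ∈ range (n + 1),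
          ((∑ m ∈ range l, p' m) - (∑ m ∈ range l, q m))) < d := by
        rw [← hD]
        refine Finset.sum_lt_sum ?_ ⟨i + 1, mem_range.mpr (by omega), ?_⟩
        · intro l _
          rcases le_or_gt l i with h | h
          · rw [hS'_low l h]
          · rcases le_or_gt l j with h2 | h2
            · have := hS'_mid l h h2
              omega
            · rw [hS'_hi l h2]
        · have h1 := hS'_mid (i + 1) (by omega) (by omega)
          have h2 := hstrict (i + 1) (by omega) (by omega)
          have h3 := hdom' (i + 1)
          omega
      have hstep := pi_step k n p i j hi_lt_n hj_lt_n hij_ne hlt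
      have hrec := IH _ hDlt p' h0' hsum' hdom' rfl
      exact hstep.trans hrec

end Chain

open PowerSeries in
/-- Over `R = k[[x]]`, if `M`, `N` are `R`-modules of length `n` with associated
partitions `p_M ⊵ p_N` in the dominance order, then `M ≤_ext N`. -/
theorem stmt8 (k : Type) [Field k] (n : ℕ)
    (M N : Type) [AddCommGroup M] [Module (PowerSeries k) M]
    [AddCommGroup N] [Module (PowerSeries k) N]
    (pM pN : ℕ → ℕ) (hpM : IsPartitionOf n pM) (hpN : IsPartitionOf n pN)
    (hM : Nonempty (M ≃ₗ[PowerSeries k]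
      (∀ i : Fin n, PowerSeries k ⧸ Ideal.span {(X : PowerSeries k) ^ pM i})))
    (hN : Nonempty (N ≃ₗ[PowerSeries k]
      (∀ i : Fin n, PowerSeries k ⧸ Ideal.span {(X : PowerSeries k) ^ pN i})))
    (hdom : Dominates pM pN) :
    ExtLE (PowerSeries k) (ModuleCat.of (PowerSeries k) M) (ModuleCat.of (PowerSeries k) N) := by
  obtain ⟨eM⟩ := hM
  obtain ⟨eN⟩ := hN
  have h1 : ExtLE (PowerSeries k) (ModuleCat.of (PowerSeries k) M)
      (ModuleCat.of (PowerSeries k) (∀ i : Fin n, Cyc k (pM i))) :=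
    extLE_step k (degen_of_equiv eM)
  have h3 : ExtLE (PowerSeries k)
      (ModuleCat.of (PowerSeries k) (∀ i : Fin n, Cyc k (pN i)))
      (ModuleCat.of (PowerSeries k) N) :=
    extLE_step k (degen_of_equiv eN.symm)
  have h2 := dominance_chain k n pN hpN.1 hpN.2.1 _ pM hpM.2.1
    (by rw [hpM.2.2, hpN.2.2]) hdom rfl
  exact h1.trans (h2.trans h3)
end
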